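/- Let H be a Hilbert space and let V, W, V', W' be subspaces with V, W closed and commensurable, V', W' finite-dimensional, V' ⊆ V^⊥ and W' ⊆ W^⊥. Then V + V' and W + W' are closed and commensurable, and dim_{W+W'}(V+V') = dim_W(V) + dim(V') − dim(W'). -/

import Mathlib

open scoped RealInnerProductSpace

/-- Two closed subspaces `V`, `W` of a Hilbert space are commensurable if the orthogonal
projection `P_W|_V : V → W` is Fredholm; equivalently, `(V, Wᗮ)` is a Fredholm pair:
`V ⊓ Wᗮ` and `Vᗮ ⊓ W` are finite-dimensional and `V ⊔ Wᗮ` is closed. -/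
def CommensurableSubspaces {H : Type*} [NormedAddCommGroup H] [InnerProductSpace ℝ H]
    (V W : Submodule ℝ H) : Prop :=
  FiniteDimensional ℝ ↥(V ⊓ Wᗮ) ∧ FiniteDimensional ℝ ↥(Vᗮ ⊓ W) ∧
    IsClosed ((V ⊔ Wᗮ : Submodule ℝ H) : Set H)

/-- The relative dimension of `V` with respect to `W`:
`dim_W(V) = dim(V ∩ W^⊥) − dim(V^⊥ ∩ W)`. -/
noncomputable def relDim {H : Type*} [NormedAddCommGroup H] [InnerProductSpace ℝ H]
    (V W : Submodule ℝ H) : ℤ :=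
  (Module.finrank ℝ ↥(V ⊓ Wᗮ) : ℤ) - (Module.finrank ℝ ↥(Vᗮ ⊓ W) : ℤ)



open Submodule Module

namespace RelDimAux

variable {H : Type*} [NormedAddCommGroup H] [InnerProductSpace ℝ H]

/-- A closed submodule plus a finite-dimensional one is closed. -/
lemma isClosed_sup_fd (p F : Submodule ℝ H) (hp : IsClosed (p : Set H))
    [FiniteDimensional ℝ F] : IsClosed ((p ⊔ F : Submodule ℝ H) : Set H) := by
  haveI : IsClosed (p : Set H) := hp
  haveI : Module.Finite ℝ (F.map p.mkQ) := Module.Finite.map F p.mkQ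
  let π : H →L[ℝ] H ⧸ p := p.mkQ.mkContinuous 1 fun x => by
    simpa using Submodule.Quotient.norm_mk_le p x
  have h1 : (p ⊔ F : Submodule ℝ H) = (F.map p.mkQ).comap p.mkQ := by
    rw [Submodule.comap_map_eq, Submodule.ker_mkQ, sup_comm]
  have h2 : IsClosed ((F.map p.mkQ : Submodule ℝ (H ⧸ p)) : Set (H ⧸ p)) :=
    Submodule.closed_of_finiteDimensional _
  have h3 : ((p ⊔ F : Submodule ℝ H) : Set H) = π ⁻¹' (F.map p.mkQ) := by
    rw [h1]; rfl
  rw [h3]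
  exact h2.preimage π.continuous

/-- Cutting a finite-dimensional space by the orthocomplement of a non-orthogonal vector
drops the dimension by exactly one. -/
lemma finrank_inf_orthogonal_singleton (K : Submodule ℝ H) [FiniteDimensional ℝ K]
    {e : H} (hw : ∃ w ∈ K, ⟪e, w⟫ ≠ 0) :
    finrank ℝ ↥(K ⊓ (Submodule.span ℝ {e})ᗮ) + 1 = finrank ℝ K := by
  obtain ⟨w, hwK, hw0⟩ := hw
  let f : ↥K →ₗ[ℝ] ℝ := (innerSL ℝ e).toLinearMap.comp K.subtype
  have hfval : ∀ x : ↥K, f x = ⟪e, (x : H)⟫ := fun x => rfl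
  have hker : (K ⊓ (Submodule.span ℝ {e})ᗮ) = (LinearMap.ker f).map K.subtype := by
    ext x
    simp only [Submodule.mem_map, Submodule.mem_inf, LinearMap.mem_ker]
    constructor
    · rintro ⟨hxK, hxO⟩
      exact ⟨⟨x, hxK⟩, by
        simpa [hfval] using Submodule.mem_orthogonal_singleton_iff_inner_right.1 hxO, rfl⟩
    · rintro ⟨⟨y, hy⟩, hfy, rfl⟩
      exact ⟨hy, Submodule.mem_orthogonal_singleton_iff_inner_right.2 (by simpa [hfval] using hfy)⟩
  have hsurj : LinearMap.range f = ⊤ := by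
    rw [LinearMap.range_eq_top]
    intro r
    refine ⟨(r / ⟪e, w⟫) • ⟨w, hwK⟩, ?_⟩
    have : f ((r / ⟪e, w⟫) • (⟨w, hwK⟩ : ↥K)) = (r / ⟪e, w⟫) * ⟪e, w⟫ := by
      rw [map_smul]; simp [hfval, smul_eq_mul]
    rw [this, div_mul_cancel₀ _ hw0]
  have hrn := LinearMap.finrank_range_add_finrank_ker f
  rw [hsurj, finrank_top, Module.finrank_self] at hrn
  rw [hker, Submodule.finrank_map_subtype_eq]
  omega

/-- Adjoining the span of a vector outside a finite-dimensional space raises dimension by one. -/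
lemma finrank_sup_span_singleton (F : Submodule ℝ H) [FiniteDimensional ℝ F] {y : H}
    (hy : y ∉ F) :
    finrank ℝ ↥(F ⊔ Submodule.span ℝ {y}) = finrank ℝ F + 1 := by
  have hy0 : y ≠ 0 := fun h => hy (h ▸ F.zero_mem)
  have hd : F ⊓ Submodule.span ℝ {y} = ⊥ := by
    rw [eq_bot_iff]
    rintro x hx
    rw [Submodule.mem_inf] at hx
    obtain ⟨hxF, hxs⟩ := hx
    obtain ⟨c, rfl⟩ := Submodule.mem_span_singleton.1 hxs
    rcases eq_or_ne c 0 with rfl | hc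
    · simp
    · exact absurd (by simpa [smul_smul, inv_mul_cancel₀ hc] using F.smul_mem c⁻¹ hxF) hy
  have h := Submodule.finrank_sup_add_finrank_inf_eq F (Submodule.span ℝ {y})
  rw [hd, finrank_bot, finrank_span_singleton hy0] at h
  omega

/-- Orthogonal decomposition of a subspace along a member vector. -/
lemma span_sup_inf_orthogonal {K : Submodule ℝ H} {e : H} (he : e ∈ K) :
    Submodule.span ℝ {e} ⊔ (K ⊓ (Submodule.span ℝ {e})ᗮ) = K := by
  rcases eq_or_ne e 0 with rfl | he0
  · simp
  apply le_antisymm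
  · exact sup_le ((Submodule.span_singleton_le_iff_mem _ _).2 he) inf_le_left
  · intro x hx
    have hee : ⟪e, e⟫ ≠ 0 := by
      exact (inner_self_ne_zero (𝕜 := ℝ)).2 he0
    have h1 : x - (⟪e, x⟫ / ⟪e, e⟫) • e ∈ K ⊓ (Submodule.span ℝ {e})ᗮ := by
      refine ⟨K.sub_mem hx (K.smul_mem _ he),
        Submodule.mem_orthogonal_singleton_iff_inner_right.2 ?_⟩
      rw [inner_sub_right, real_inner_smul_right, div_mul_cancel₀ _ hee, sub_self]
    have h2 : x = (⟪e, x⟫ / ⟪e, e⟫) • e + (x - (⟪e, x⟫ / ⟪e, e⟫) • e) := by abel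
    rw [h2]
    exact add_mem (mem_sup_left (Submodule.smul_mem _ _ (Submodule.mem_span_singleton_self e)))
      (mem_sup_right h1)


/-- Duality: if `V ⊔ Wᗮ` is closed and `Vᗮ ⊓ W` is finite dimensional,
then `Vᗮ ⊔ W` is closed. -/
lemma dual_isClosed [CompleteSpace H] {V W : Submodule ℝ H}
    (hV : IsClosed (V : Set H)) (hW : IsClosed (W : Set H))
    (hS : IsClosed ((V ⊔ Wᗮ : Submodule ℝ H) : Set H))
    (hfd : FiniteDimensional ℝ ↥(Vᗮ ⊓ W)) :
    IsClosed ((Vᗮ ⊔ W : Submodule ℝ H) : Set H) := by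
  set S : Submodule ℝ H := V ⊔ Wᗮ with hSdef
  haveI : CompleteSpace ↥S := hS.completeSpace_coe
  haveI : CompleteSpace ↥V := hV.completeSpace_coe
  haveI : CompleteSpace ↥W := hW.completeSpace_coe
  haveI : CompleteSpace ↥(Wᗮ) := (Submodule.isClosed_orthogonal W).completeSpace_coe
  haveI : CompleteSpace ↥(Vᗮ) := (Submodule.isClosed_orthogonal V).completeSpace_coe
  haveI : CompleteSpace ↥(W ⊓ S) := (hW.inter hS).completeSpace_coe
  -- the sum map onto S
  let φL : (↥V × ↥Wᗮ) →ₗ[ℝ] ↥S :=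
    LinearMap.codRestrict S
      ((V.subtype.comp (LinearMap.fst ℝ _ _)) + ((Wᗮ).subtype.comp (LinearMap.snd ℝ _ _)))
      (fun x => Submodule.add_mem_sup x.1.2 x.2.2)
  have φLval : ∀ x : ↥V × ↥Wᗮ, (φL x : H) = (x.1 : H) + (x.2 : H) := fun x => rfl
  have φbound : ∀ x : ↥V × ↥Wᗮ, ‖φL x‖ ≤ 2 * ‖x‖ := by
    intro x
    have : ‖φL x‖ = ‖(x.1 : H) + (x.2 : H)‖ := by rw [← φLval]; rfl
    rw [this]
    calc ‖(x.1 : H) + (x.2 : H)‖ ≤ ‖(x.1 : H)‖ + ‖(x.2 : H)‖ := norm_add_le _ _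
      _ ≤ ‖x‖ + ‖x‖ := add_le_add (norm_fst_le x) (norm_snd_le x)
      _ = 2 * ‖x‖ := by ring
  let φ : (↥V × ↥Wᗮ) →L[ℝ] ↥S := φL.mkContinuous 2 φbound
  have hsurj : Function.Surjective φ := by
    rintro ⟨s, hs⟩
    obtain ⟨v, hv, w, hw, rfl⟩ := Submodule.mem_sup.1 hs
    exact ⟨(⟨v, hv⟩, ⟨w, hw⟩), rfl⟩
  obtain ⟨C, hC0, hC⟩ := φ.exists_preimage_norm_le hsurj
  -- the key norm estimate
  have key : ∀ a ∈ Vᗮ, ∀ b ∈ W ⊓ S, ‖b‖ ≤ (1 + C) * ‖a + b‖ := by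
    intro a ha b hb
    rw [Submodule.mem_inf] at hb
    obtain ⟨hbW, hbS⟩ := hb
    obtain ⟨x, hx, hxn⟩ := hC ⟨b, hbS⟩
    have hxb : (x.1 : H) + (x.2 : H) = b := by
      have := congrArg Subtype.val hx
      rwa [show (φ x : H) = (x.1 : H) + (x.2 : H) from rfl] at this
    have hbn : ‖(⟨b, hbS⟩ : ↥S)‖ = ‖b‖ := rfl
    have hy'n : ‖(x.2 : H)‖ ≤ C * ‖b‖ := by
      calc ‖(x.2 : H)‖ = ‖x.2‖ := rfl
        _ ≤ ‖x‖ := norm_snd_le x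
        _ ≤ C * ‖b‖ := by rw [← hbn]; exact hxn
    have h1 : ⟪a, (x.1 : H)⟫ = 0 := by rw [real_inner_comm]; exact ha _ x.1.2
    have h2 : ⟪b, (x.2 : H)⟫ = 0 := x.2.2 b hbW
    have hab1 : ⟪a + b, (x.2 : H)⟫ = ⟪a, (x.2 : H)⟫ := by
      rw [inner_add_left, h2, add_zero]
    have hab2 : ⟪a, b⟫ = ⟪a, (x.2 : H)⟫ := by
      rw [← hxb, inner_add_right, h1, zero_add]
    have hab : ⟪a, b⟫ = ⟪a + b, (x.2 : H)⟫ := by rw [hab1, hab2]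
    have h3 : ‖b‖ ^ 2 = ⟪a + b, b⟫ - ⟪a, b⟫ := by
      rw [inner_add_left, ← real_inner_self_eq_norm_sq]
      ring
    have h4 : ⟪a + b, b⟫ ≤ ‖a + b‖ * ‖b‖ := real_inner_le_norm _ _
    have h5 : -⟪a, b⟫ ≤ ‖a + b‖ * (C * ‖b‖) := by
      rw [hab]
      calc -⟪a + b, (x.2 : H)⟫ ≤ |⟪a + b, (x.2 : H)⟫| := neg_le_abs _
        _ ≤ ‖a + b‖ * ‖(x.2 : H)‖ := abs_real_inner_le_norm _ _
        _ ≤ ‖a + b‖ * (C * ‖b‖) := by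
            exact mul_le_mul_of_nonneg_left hy'n (norm_nonneg _)
    have h6 : ‖b‖ ^ 2 ≤ (1 + C) * ‖a + b‖ * ‖b‖ := by nlinarith
    rcases eq_or_lt_of_le (norm_nonneg b) with hb0 | hb0
    · rw [← hb0]
      positivity
    · nlinarith
  -- the big closed piece
  let A : Submodule ℝ H := Vᗮ ⊔ (W ⊓ S)
  have hA : IsClosed (A : Set H) := by
    let ψL : (↥(Vᗮ) × ↥(W ⊓ S)) →ₗ[ℝ] H :=
      ((Vᗮ).subtype.comp (LinearMap.fst ℝ _ _)) + ((W ⊓ S).subtype.comp (LinearMap.snd ℝ _ _))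
    have ψval : ∀ x : ↥(Vᗮ) × ↥(W ⊓ S), ψL x = (x.1 : H) + (x.2 : H) := fun x => rfl
    have ψbound : ∀ x, ‖ψL x‖ ≤ 2 * ‖x‖ := by
      intro x
      rw [ψval]
      calc ‖(x.1 : H) + (x.2 : H)‖ ≤ ‖(x.1 : H)‖ + ‖(x.2 : H)‖ := norm_add_le _ _
        _ ≤ ‖x‖ + ‖x‖ := add_le_add (norm_fst_le x) (norm_snd_le x)
        _ = 2 * ‖x‖ := by ring
    let ψ : (↥(Vᗮ) × ↥(W ⊓ S)) →L[ℝ] H := ψL.mkContinuous 2 ψbound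
    have hanti : AntilipschitzWith (⟨2 + C, by linarith⟩ : NNReal) ψ := by
      apply ContinuousLinearMap.antilipschitz_of_bound
      intro x
      have hb : ‖(x.2 : H)‖ ≤ (1 + C) * ‖ψ x‖ := by
        have := key (x.1 : H) x.1.2 (x.2 : H) x.2.2
        rwa [show (ψ x : H) = (x.1 : H) + (x.2 : H) from rfl]
      have ha : ‖(x.1 : H)‖ ≤ (2 + C) * ‖ψ x‖ := by
        have : (x.1 : H) = ψ x - (x.2 : H) := by
          rw [show (ψ x : H) = (x.1 : H) + (x.2 : H) from rfl]; abel
        rw [this]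
        calc ‖ψ x - (x.2 : H)‖ ≤ ‖ψ x‖ + ‖(x.2 : H)‖ := norm_sub_le _ _
          _ ≤ ‖ψ x‖ + (1 + C) * ‖ψ x‖ := by linarith
          _ = (2 + C) * ‖ψ x‖ := by ring
      rw [Prod.norm_def]
      show max ‖x.1‖ ‖x.2‖ ≤ (2 + C) * ‖ψ x‖
      apply max_le
      · exact ha
      · calc ‖x.2‖ ≤ (1 + C) * ‖ψ x‖ := hb
          _ ≤ (2 + C) * ‖ψ x‖ := by nlinarith [norm_nonneg (ψ x)]
    have hrange : Set.range ψ = (A : Set H) := by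
      ext z
      constructor
      · rintro ⟨x, rfl⟩
        exact Submodule.add_mem_sup x.1.2 x.2.2
      · intro hz
        obtain ⟨a, haa, b, hbb, rfl⟩ := Submodule.mem_sup.1 hz
        exact ⟨(⟨a, haa⟩, ⟨b, hbb⟩), rfl⟩
    have := hanti.isClosed_range ψ.uniformContinuous
    rwa [hrange] at this
  -- decompose Vᗮ ⊔ W
  have hSp : Sᗮ = Vᗮ ⊓ W := by
    rw [hSdef, ← Submodule.inf_orthogonal, Submodule.orthogonal_orthogonal W]
  have hdecomp : Vᗮ ⊔ W = A ⊔ (Vᗮ ⊓ W) := by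
    apply le_antisymm
    · refine sup_le (le_sup_left.trans le_sup_left) ?_
      intro w hw
      obtain ⟨y, hy, z, hz, rfl⟩ := S.exists_add_mem_mem_orthogonal w
      rw [hSp] at hz
      have hyW : y ∈ W := by
        have : y = (y + z) - z := by abel
        rw [this]
        exact W.sub_mem hw hz.2
      exact add_mem (mem_sup_left (mem_sup_right ⟨hyW, hy⟩)) (mem_sup_right hz)
    · exact sup_le (sup_le le_sup_left (inf_le_left.trans le_sup_right))
        (inf_le_left.trans le_sup_left)
  rw [hdecomp]
  exact isClosed_sup_fd A (Vᗮ ⊓ W) hA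


/-- Commensurability is symmetric (for closed subspaces of a Hilbert space). -/
lemma commensurable_symm [CompleteSpace H] {V W : Submodule ℝ H}
    (hV : IsClosed (V : Set H)) (hW : IsClosed (W : Set H))
    (h : CommensurableSubspaces V W) : CommensurableSubspaces W V := by
  obtain ⟨h1, h2, h3⟩ := h
  refine ⟨by rwa [inf_comm], by rwa [inf_comm], ?_⟩
  have := dual_isClosed hV hW h3 h2
  rwa [sup_comm] at this

lemma relDim_symm {V W : Submodule ℝ H} : relDim W V = - relDim V W := by
  unfold relDim
  rw [inf_comm W Vᗮ, inf_comm Wᗮ V]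
  ring

/-- One-vector step. -/
lemma step [CompleteSpace H] {V W : Submodule ℝ H}
    (hV : IsClosed (V : Set H)) (hW : IsClosed (W : Set H))
    (hcom : CommensurableSubspaces V W) {e : H} (he : e ∈ Vᗮ) (he0 : e ≠ 0) :
    IsClosed ((V ⊔ Submodule.span ℝ {e} : Submodule ℝ H) : Set H) ∧
      CommensurableSubspaces (V ⊔ Submodule.span ℝ {e}) W ∧
      relDim (V ⊔ Submodule.span ℝ {e}) W = relDim V W + 1 := by
  obtain ⟨fd1, fd2, hS⟩ := hcom
  haveI := fd1; haveI := fd2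
  haveI : CompleteSpace ↥W := hW.completeSpace_coe
  haveI : CompleteSpace ↥(V ⊔ Wᗮ : Submodule ℝ H) := hS.completeSpace_coe
  set A : Submodule ℝ H := V ⊔ Submodule.span ℝ {e} with hAdef
  have hAort : Aᗮ = Vᗮ ⊓ (Submodule.span ℝ {e})ᗮ := by
    rw [hAdef, ← Submodule.inf_orthogonal]
  have hAc : IsClosed (A : Set H) := isClosed_sup_fd V _ hV
  refine ⟨hAc, ?_⟩
  by_cases hc : e ∈ (V ⊔ Wᗮ : Submodule ℝ H)
  · -- e ∈ S : kernel part grows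
    obtain ⟨v, hv, y, hy, hevy⟩ := Submodule.mem_sup.1 hc
    have hyA : A = V ⊔ Submodule.span ℝ {y} := by
      apply le_antisymm
      · refine sup_le le_sup_left ((Submodule.span_singleton_le_iff_mem _ _).2 ?_)
        have : e = v + y := hevy.symm
        rw [this]
        exact add_mem (mem_sup_left hv)
          (mem_sup_right (Submodule.mem_span_singleton_self y))
      · refine sup_le le_sup_left ((Submodule.span_singleton_le_iff_mem _ _).2 ?_)
        have : y = e - v := by rw [← hevy]; abel
        rw [this]
        exact sub_mem (mem_sup_right (Submodule.mem_span_singleton_self e)) (mem_sup_left hv)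
    have hiA : A ⊓ Wᗮ = (V ⊓ Wᗮ) ⊔ Submodule.span ℝ {y} := by
      apply le_antisymm
      · rintro x hx
        rw [Submodule.mem_inf] at hx
        obtain ⟨hxA, hxW⟩ := hx
        rw [hyA] at hxA
        obtain ⟨v₁, hv₁, y₁, hy₁, rfl⟩ := Submodule.mem_sup.1 hxA
        obtain ⟨c, rfl⟩ := Submodule.mem_span_singleton.1 hy₁
        have hv₁W : v₁ ∈ Wᗮ := by
          have : v₁ = (v₁ + c • y) - c • y := by abel
          rw [this]
          exact Wᗮ.sub_mem hxW (Wᗮ.smul_mem c hy)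
        exact add_mem (mem_sup_left ⟨hv₁, hv₁W⟩)
          (mem_sup_right (Submodule.smul_mem _ c (Submodule.mem_span_singleton_self y)))
      · refine sup_le (inf_le_inf_right _ le_sup_left) ?_
        rw [Submodule.span_singleton_le_iff_mem]
        refine ⟨?_, hy⟩
        rw [hyA]
        exact mem_sup_right (Submodule.mem_span_singleton_self y)
    have hynVW : y ∉ (V ⊓ Wᗮ : Submodule ℝ H) := by
      intro hyVW
      have heV : e ∈ V := by
        rw [← hevy]; exact V.add_mem hv hyVW.1
      have : e ∈ V ⊓ Vᗮ := ⟨heV, he⟩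
      rw [Submodule.inf_orthogonal_eq_bot] at this
      exact he0 this
    have hiA2 : Aᗮ ⊓ W = Vᗮ ⊓ W := by
      rw [hAort]
      apply le_antisymm
      · exact inf_le_inf_right _ inf_le_left
      · rintro x hx
        rw [Submodule.mem_inf] at hx
        obtain ⟨hxV, hxW⟩ := hx
        refine ⟨⟨hxV, Submodule.mem_orthogonal_singleton_iff_inner_left.2 ?_⟩, hxW⟩
        rw [← hevy, inner_add_right]
        have h1 : ⟪x, v⟫ = 0 := by rw [real_inner_comm]; exact hxV v hv
        have h2 : ⟪x, y⟫ = 0 := hy x hxW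
        rw [h1, h2, add_zero]
    have hsupA : A ⊔ Wᗮ = V ⊔ Wᗮ := by
      apply le_antisymm
      · refine sup_le (sup_le le_sup_left ?_) le_sup_right
        exact (Submodule.span_singleton_le_iff_mem _ _).2 hc
      · exact sup_le (le_sup_left.trans (sup_le_sup_right le_sup_left _)) le_sup_right
    haveI fdA : FiniteDimensional ℝ ↥(A ⊓ Wᗮ) := by
      rw [hiA]; infer_instance
    refine ⟨⟨fdA, by rwa [hiA2], by rwa [hsupA]⟩, ?_⟩
    have hr1 : finrank ℝ ↥(A ⊓ Wᗮ) = finrank ℝ ↥(V ⊓ Wᗮ) + 1 := by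
      rw [hiA]; exact finrank_sup_span_singleton _ hynVW
    unfold relDim
    rw [hr1, hiA2]
    push_cast
    ring
  · -- e ∉ S : cokernel part shrinks
    have hSp : (V ⊔ Wᗮ : Submodule ℝ H)ᗮ = Vᗮ ⊓ W := by
      rw [← Submodule.inf_orthogonal, Submodule.orthogonal_orthogonal W]
    have hc' : e ∉ ((V ⊔ Wᗮ : Submodule ℝ H)ᗮᗮ : Submodule ℝ H) := by
      rwa [Submodule.orthogonal_orthogonal]
    have hu : ∃ u ∈ (Vᗮ ⊓ W : Submodule ℝ H), ⟪e, u⟫ ≠ 0 := by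
      by_contra hcon
      push_neg at hcon
      apply hc'
      rw [Submodule.mem_orthogonal]
      intro u hu
      rw [hSp] at hu
      rw [real_inner_comm]
      exact hcon u hu
    have hiA : A ⊓ Wᗮ = V ⊓ Wᗮ := by
      apply le_antisymm
      · rintro x hx
        rw [Submodule.mem_inf] at hx
        obtain ⟨hxA, hxW⟩ := hx
        obtain ⟨v₁, hv₁, y₁, hy₁, rfl⟩ := Submodule.mem_sup.1 hxA
        obtain ⟨c, rfl⟩ := Submodule.mem_span_singleton.1 hy₁
        rcases eq_or_ne c 0 with rfl | hc0
        · simpa using ⟨hv₁, by simpa using hxW⟩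
        · exfalso
          apply hc
          have hce : c • e = (v₁ + c • e) - v₁ := by abel
          have : c • e ∈ (V ⊔ Wᗮ : Submodule ℝ H) := by
            rw [hce]
            exact sub_mem (mem_sup_right (by
              have : v₁ + c • e ∈ Wᗮ := hxW
              exact this)) (mem_sup_left hv₁)
          have := Submodule.smul_mem _ c⁻¹ this
          rwa [smul_smul, inv_mul_cancel₀ hc0, one_smul] at this
      · exact inf_le_inf_right _ le_sup_left
    have hiA2 : Aᗮ ⊓ W = (Vᗮ ⊓ W) ⊓ (Submodule.span ℝ {e})ᗮ := by
      rw [hAort]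
      rw [inf_assoc, inf_comm (Submodule.span ℝ {e})ᗮ W, ← inf_assoc]
    have hr2 : finrank ℝ ↥(Aᗮ ⊓ W) + 1 = finrank ℝ ↥(Vᗮ ⊓ W) := by
      rw [hiA2]
      exact finrank_inf_orthogonal_singleton _ hu
    have hsupA : A ⊔ Wᗮ = (V ⊔ Wᗮ) ⊔ Submodule.span ℝ {e} := by
      rw [hAdef]
      rw [sup_right_comm]
    have hclA : IsClosed ((A ⊔ Wᗮ : Submodule ℝ H) : Set H) := by
      rw [hsupA]
      exact isClosed_sup_fd _ _ hS
    haveI fdA1 : FiniteDimensional ℝ ↥(A ⊓ Wᗮ) := by rw [hiA]; infer_instance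
    haveI fdA2 : FiniteDimensional ℝ ↥(Aᗮ ⊓ W) := by
      rw [hiA2]; exact Submodule.finiteDimensional_inf_left _ _
    refine ⟨⟨fdA1, fdA2, hclA⟩, ?_⟩
    unfold relDim
    rw [hiA]
    have : (finrank ℝ ↥(Aᗮ ⊓ W) : ℤ) = (finrank ℝ ↥(Vᗮ ⊓ W) : ℤ) - 1 := by
      have := hr2
      push_cast [← this]
      ring
    rw [this]
    ring


/-- Adding a finite-dimensional orthogonal piece to the first subspace. -/
lemma add_left [CompleteSpace H] {W : Submodule ℝ H} (hW : IsClosed (W : Set H)) :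
    ∀ (n : ℕ) (V V' : Submodule ℝ H), IsClosed (V : Set H) → CommensurableSubspaces V W →
      V' ≤ Vᗮ → ∀ (_ : FiniteDimensional ℝ V'), finrank ℝ V' = n →
      IsClosed ((V ⊔ V' : Submodule ℝ H) : Set H) ∧ CommensurableSubspaces (V ⊔ V') W ∧
        relDim (V ⊔ V') W = relDim V W + n := by
  intro n
  induction n with
  | zero =>
    intro V V' hV hcom hle hfd hrk
    haveI := hfd
    have : V' = ⊥ := Submodule.finrank_eq_zero.1 hrk
    rw [this, sup_bot_eq]
    exact ⟨hV, hcom, by simp⟩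
  | succ n ih =>
    intro V V' hV hcom hle hfd hrk
    haveI := hfd
    have hne : V' ≠ ⊥ := by
      intro h
      rw [h, finrank_bot] at hrk
      omega
    obtain ⟨e, heV', he0⟩ := Submodule.exists_mem_ne_zero_of_ne_bot hne
    have heVp : e ∈ Vᗮ := hle heV'
    obtain ⟨hAc, hAcom, hArd⟩ := step hV hW hcom heVp he0
    set A : Submodule ℝ H := V ⊔ Submodule.span ℝ {e} with hAdef
    set V'' : Submodule ℝ H := V' ⊓ (Submodule.span ℝ {e})ᗮ with hV''def
    haveI : FiniteDimensional ℝ V'' := Submodule.finiteDimensional_inf_left _ _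
    have hrk'' : finrank ℝ V'' + 1 = n + 1 := by
      rw [hV''def, ← hrk]
      exact finrank_inf_orthogonal_singleton V' ⟨e, heV', (inner_self_ne_zero (𝕜 := ℝ)).2 he0⟩
    have hV''le : V'' ≤ Aᗮ := by
      rw [hAdef, ← Submodule.inf_orthogonal]
      exact le_inf (inf_le_left.trans hle) inf_le_right
    have hsup : A ⊔ V'' = V ⊔ V' := by
      rw [hAdef, sup_assoc]
      congr 1
      exact span_sup_inf_orthogonal heV'
    obtain ⟨h1, h2, h3⟩ := ih A V'' hAc hAcom hV''le inferInstance (by omega)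
    rw [hsup] at h1 h2 h3
    refine ⟨h1, h2, ?_⟩
    rw [h3, hArd]
    push_cast
    ring


end RelDimAux

open RelDimAux

/-- **Additivity of the relative dimension under finite-dimensional orthogonal
extensions.** If `V, W` are closed commensurable subspaces and `V' ⊆ V^⊥`, `W' ⊆ W^⊥` are
finite-dimensional, then `V + V'` and `W + W'` are closed and commensurable, and
`dim_{W+W'}(V+V') = dim_W(V) + dim V' − dim W'`. -/
theorem relDim_sup_finiteDimensional
    {H : Type*} [NormedAddCommGroup H] [InnerProductSpace ℝ H] [CompleteSpace H]
    (V W V' W' : Submodule ℝ H)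
    (hVc : IsClosed (V : Set H)) (hWc : IsClosed (W : Set H))
    [FiniteDimensional ℝ V'] [FiniteDimensional ℝ W']
    (hV' : V' ≤ Vᗮ) (hW' : W' ≤ Wᗮ)
    (hcom : CommensurableSubspaces V W) :
    IsClosed ((V ⊔ V' : Submodule ℝ H) : Set H) ∧
    IsClosed ((W ⊔ W' : Submodule ℝ H) : Set H) ∧
    CommensurableSubspaces (V ⊔ V') (W ⊔ W') ∧
    relDim (V ⊔ V') (W ⊔ W')
      = relDim V W + (Module.finrank ℝ V' : ℤ) - (Module.finrank ℝ W' : ℤ) := by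
  obtain ⟨h1c, h1com, h1rd⟩ :=
    add_left hWc (finrank ℝ V') V V' hVc hcom hV' inferInstance rfl
  have h1sym : CommensurableSubspaces W (V ⊔ V') := commensurable_symm h1c hWc h1com
  obtain ⟨h2c, h2com, h2rd⟩ :=
    add_left (W := V ⊔ V') h1c (finrank ℝ W') W W' hWc h1sym hW' inferInstance rfl
  refine ⟨h1c, h2c, commensurable_symm h2c h1c h2com, ?_⟩
  have : relDim (V ⊔ V') (W ⊔ W') = - relDim (W ⊔ W') (V ⊔ V') := by
    rw [relDim_symm]
  rw [this, h2rd, relDim_symm (V := V ⊔ V') (W := W), h1rd]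
  ring
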